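/- Let H be self-adjoint on ℋ, V symmetric with ‖Vψ‖ ≤ a‖Hψ‖ + b‖ψ‖ on dom H for a < 1, and suppose V(H-i)^{-p} ∈ 𝒮^{n/p} for p = 1,…,n. Set H_t = H + tV for t ∈ [0,1]. Then W(H_t - i)^{-1} ∈ 𝒮^n with ‖V(H_t-i)^{-1}‖_n ≤ ((1+b)/(1-a)) ‖V(H-i)^{-1}‖_n. -/

import Mathlib

open Complex MeasureTheory Finset

variable {ℋ : Type*} [NormedAddCommGroup ℋ] [InnerProductSpace ℂ ℋ] [CompleteSpace ℋ]

/-- The defining set for the Schatten `p`-norm of `T`: the values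
`(Σᵢ |⟨gᵢ, T eᵢ⟩|^p)^{1/p}` over all finite orthonormal systems `(eᵢ)`, `(gᵢ)`. -/
def schattenSet (p : ℝ) (T : ℋ →L[ℂ] ℋ) : Set ℝ :=
  { r | ∃ (m : ℕ) (e g : Fin m → ℋ), Orthonormal ℂ e ∧ Orthonormal ℂ g ∧
      r = (∑ i, ‖(inner ℂ (g i) (T (e i)) : ℂ)‖ ^ p) ^ (1 / p) }

/-- `T` belongs to the Schatten `p`-class `𝒮^p` (for `p ≥ 1`). -/
def MemSchatten (p : ℝ) (T : ℋ →L[ℂ] ℋ) : Prop :=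
  BddAbove (schattenSet p T)

/-- The Schatten `p`-norm `‖T‖_p` (for `p ≥ 1`). -/
noncomputable def schattenNorm (p : ℝ) (T : ℋ →L[ℂ] ℋ) : ℝ :=
  sSup (schattenSet p T)

open Module Finset
variable {E : Type*} [NormedAddCommGroup E] [InnerProductSpace ℂ E]

/-- A contraction on a finite-dimensional complex inner ℂ product space is the average of two
inner-product-preserving maps. -/
lemma contraction_avg_two_isometries [FiniteDimensional ℂ E] {N : ℕ} (hNE : finrank ℂ E = N)
    (L : E →ₗ[ℂ] E) (hL : ∀ v, ‖L v‖ ≤ ‖v‖) :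
    ∃ U W : E → E,
      (∀ v w, (inner ℂ (U v) (U w) : ℂ) = inner ℂ v w) ∧
      (∀ v w, (inner ℂ (W v) (W w) : ℂ) = inner ℂ v w) ∧
      ∀ v, L v = ((1:ℝ)/2) • (U v + W v) := by
  classical
  set S : E →ₗ[ℂ] E := LinearMap.adjoint L ∘ₗ L with hSdef
  have hS : S.IsSymmetric := by
    intro x y
    simp only [hSdef, LinearMap.comp_apply]
    rw [LinearMap.adjoint_inner_left, LinearMap.adjoint_inner_right]
  set β := hS.eigenvectorBasis hNE with hβ
  set μ := hS.eigenvalues hNE with hμ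
  have hSβ : ∀ i, S (β i) = (μ i : ℂ) • β i := fun i => hS.apply_eigenvectorBasis hNE i
  have hμ_eq : ∀ i, (μ i : ℂ) = (inner ℂ (L (β i)) (L (β i)) : ℂ) := by
    intro i
    have h1 : (inner ℂ (β i) (S (β i)) : ℂ) = (μ i : ℂ) := by
      rw [hSβ, inner_smul_right, inner_self_eq_norm_sq_to_K, β.orthonormal.1 i]
      norm_num
    rw [← h1, hSdef]
    simp only [LinearMap.comp_apply]
    rw [LinearMap.adjoint_inner_right]
  have hμsq : ∀ i, μ i = ‖L (β i)‖ ^ 2 := by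
    intro i
    have h2 : (μ i : ℂ) = (‖L (β i)‖ ^ 2 : ℝ) := by
      rw [hμ_eq i, inner_self_eq_norm_sq_to_K]; norm_num
    exact_mod_cast h2
  have hμ0 : ∀ i, 0 ≤ μ i := fun i => (hμsq i) ▸ sq_nonneg _
  have hμ1 : ∀ i, μ i ≤ 1 := by
    intro i
    have h3 := hμsq i
    have h4 := hL (β i)
    have h5 : ‖(β i : E)‖ = 1 := β.orthonormal.1 i
    nlinarith [norm_nonneg (L (β i))]
  have hyy : ∀ i j, (inner ℂ (L (β i)) (L (β j)) : ℂ) = if i = j then (μ j : ℂ) else 0 := by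
    intro i j
    have h1 : (inner ℂ (L (β i)) (L (β j)) : ℂ) = inner ℂ (β i) (S (β j)) := by
      simp only [hSdef, LinearMap.comp_apply]
      rw [LinearMap.adjoint_inner_right]
    rw [h1, hSβ, inner_smul_right, orthonormal_iff_ite.mp β.orthonormal]
    split <;> simp
  set z : Fin N → E := fun i => (((Real.sqrt (μ i) : ℝ) : ℂ))⁻¹ • L (β i) with hz
  have horth : Orthonormal ℂ (Set.restrict {i | μ i ≠ 0} z) := by
    rw [orthonormal_iff_ite]
    rintro ⟨i, hi⟩ ⟨j, hj⟩
    show inner ℂ (z i) (z j) = _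
    simp only [Set.restrict_apply, hz, inner_smul_left, inner_smul_right, map_inv₀,
      Complex.conj_ofReal, hyy]
    by_cases hij : i = j
    · subst hij
      have hs : Real.sqrt (μ i) ≠ 0 := by
        intro h0
        exact hi (by rwa [Real.sqrt_eq_zero (hμ0 i)] at h0)
      have hr : (Real.sqrt (μ i))⁻¹ * ((Real.sqrt (μ i))⁻¹ * μ i) = 1 := by
        rw [← mul_assoc, ← mul_inv, Real.mul_self_sqrt (hμ0 i), inv_mul_cancel₀ hi]
      simp only [if_true]
      exact_mod_cast congrArg (fun r : ℝ => (r : ℂ)) hr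
    · have hne : (⟨i, hi⟩ : {i | μ i ≠ 0}) ≠ ⟨j, hj⟩ := by
        simp [Subtype.ext_iff, hij]
      rw [if_neg hij, if_neg hne]
      ring
  obtain ⟨ζ, hζ⟩ := Orthonormal.exists_orthonormalBasis_extension_of_card_eq
    (by simpa using hNE) horth
  have hkey : ∀ i, L (β i) = ((Real.sqrt (μ i) : ℝ) : ℂ) • ζ i := by
    intro i
    by_cases h : μ i = 0
    · have h0 : ‖L (β i)‖ ^ 2 = 0 := by rw [← hμsq i, h]
      have hz0 : L (β i) = 0 := by
        have := pow_eq_zero_iff (n := 2) (by norm_num) |>.mp h0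
        simpa using this
      simp [h, hz0]
    · have hs : Real.sqrt (μ i) ≠ 0 := by
        simp only [ne_eq, Real.sqrt_eq_zero (hμ0 i)]; exact h
      rw [hζ i h, hz]
      simp only [smul_smul]
      rw [← Complex.ofReal_inv, ← Complex.ofReal_mul, mul_inv_cancel₀ hs]
      simp
  set cc : Fin N → ℂ := fun i => ((Real.sqrt (μ i) : ℝ) : ℂ) + Complex.I * ((Real.sqrt (1 - μ i) : ℝ) : ℂ) with hcc
  set dd : Fin N → ℂ := fun i => ((Real.sqrt (μ i) : ℝ) : ℂ) - Complex.I * ((Real.sqrt (1 - μ i) : ℝ) : ℂ) with hdd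
  have hx2 : ∀ i, ((Real.sqrt (μ i) : ℝ) : ℂ) * ((Real.sqrt (μ i) : ℝ) : ℂ) = ((μ i : ℝ) : ℂ) := by
    intro i; rw [← Complex.ofReal_mul, Real.mul_self_sqrt (hμ0 i)]
  have hy2 : ∀ i, ((Real.sqrt (1 - μ i) : ℝ) : ℂ) * ((Real.sqrt (1 - μ i) : ℝ) : ℂ) = 1 - ((μ i : ℝ) : ℂ) := by
    intro i
    rw [← Complex.ofReal_mul, Real.mul_self_sqrt (by linarith [hμ1 i])]
    push_cast; ring
  have hc1 : ∀ i, (starRingEnd ℂ) (cc i) * cc i = 1 := by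
    intro i
    simp only [hcc, map_add, map_mul, Complex.conj_ofReal, Complex.conj_I]
    linear_combination hx2 i - Complex.I ^ 2 * hy2 i - (1 - ((μ i : ℝ) : ℂ)) * Complex.I_sq
  have hd1 : ∀ i, (starRingEnd ℂ) (dd i) * dd i = 1 := by
    intro i
    simp only [hdd, map_sub, map_mul, Complex.conj_ofReal, Complex.conj_I]
    linear_combination hx2 i - Complex.I ^ 2 * hy2 i - (1 - ((μ i : ℝ) : ℂ)) * Complex.I_sq
  have hcdsum : ∀ i, cc i + dd i = 2 * ((Real.sqrt (μ i) : ℝ) : ℂ) := by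
    intro i; simp only [hcc, hdd]; ring
  refine ⟨fun v => ∑ i, (cc i * (inner ℂ (β i) v : ℂ)) • ζ i,
          fun v => ∑ i, (dd i * (inner ℂ (β i) v : ℂ)) • ζ i, ?_, ?_, ?_⟩
  · intro v w
    rw [Orthonormal.inner_sum ζ.orthonormal _ _ univ]
    have hterm : ∀ i, (starRingEnd ℂ) (cc i * (inner ℂ (β i) v : ℂ)) * (cc i * (inner ℂ (β i) w : ℂ))
        = (inner ℂ v (β i) : ℂ) * inner ℂ (β i) w := by
      intro i
      rw [map_mul, inner_conj_symm]
      linear_combination ((inner ℂ v (β i) : ℂ) * (inner ℂ (β i) w : ℂ)) * hc1 i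
    simp_rw [hterm]
    exact β.sum_inner_mul_inner v w
  · intro v w
    rw [Orthonormal.inner_sum ζ.orthonormal _ _ univ]
    have hterm : ∀ i, (starRingEnd ℂ) (dd i * (inner ℂ (β i) v : ℂ)) * (dd i * (inner ℂ (β i) w : ℂ))
        = (inner ℂ v (β i) : ℂ) * inner ℂ (β i) w := by
      intro i
      rw [map_mul, inner_conj_symm]
      linear_combination ((inner ℂ v (β i) : ℂ) * (inner ℂ (β i) w : ℂ)) * hd1 i
    simp_rw [hterm]
    exact β.sum_inner_mul_inner v w
  · intro v
    have hUe : (∑ i, (cc i * (inner ℂ (β i) v : ℂ)) • ζ i) + (∑ i, (dd i * (inner ℂ (β i) v : ℂ)) • ζ i)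
        = ∑ i, (((cc i + dd i) * (inner ℂ (β i) v : ℂ)) • ζ i) := by
      rw [← Finset.sum_add_distrib]
      exact Finset.sum_congr rfl fun i _ => by rw [← add_smul, ← add_mul]
    rw [hUe, Finset.smul_sum]
    conv_lhs => rw [← β.sum_repr v]
    rw [map_sum]
    refine Finset.sum_congr rfl fun i _ => ?_
    rw [_root_.map_smul, β.repr_apply_apply, hkey i, smul_smul, ← smul_assoc]
    congr 1
    rw [Complex.real_smul]
    push_cast
    linear_combination ((inner ℂ (β i) v : ℂ)) / 2 * hcdsum i


open Module Finset in
lemma schattenSet_mem_nonneg {p : ℝ} (T : ℋ →L[ℂ] ℋ) {r : ℝ} (hr : r ∈ schattenSet p T) :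
    0 ≤ r := by
  obtain ⟨m, e, g, -, -, rfl⟩ := hr
  exact Real.rpow_nonneg
    (Finset.sum_nonneg fun i _ => Real.rpow_nonneg (norm_nonneg _) _) _

open Module Finset in
lemma zero_mem_schattenSet {p : ℝ} (hp : 1 ≤ p) (T : ℋ →L[ℂ] ℋ) :
    (0 : ℝ) ∈ schattenSet p T := by
  refine ⟨0, Fin.elim0, Fin.elim0, ⟨fun i => i.elim0, fun i => i.elim0⟩,
    ⟨fun i => i.elim0, fun i => i.elim0⟩, ?_⟩
  rw [Finset.univ_eq_empty, Finset.sum_empty, Real.zero_rpow]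
  positivity


open Module Finset in
set_option maxHeartbeats 1000000 in
/-- Key bound: if the vectors `x k` are given by a matrix `M` of operator norm `≤ c`
applied to an orthonormal family `fbH`, then the Schatten-type sum against an orthonormal
family `gH` is bounded by `c * ‖T‖_p`. -/
lemma schatten_matrix_bound {p : ℝ} (hp : 1 ≤ p) (T : ℋ →L[ℂ] ℋ) (hT : MemSchatten p T)
    {c : ℝ} (hc1 : 1 ≤ c) {N : ℕ} {gH : Fin N → ℋ} (hgH : Orthonormal ℂ gH)
    {fbH : Fin N → ℋ} (hfb : Orthonormal ℂ fbH)
    (M : EuclideanSpace ℂ (Fin N) →ₗ[ℂ] EuclideanSpace ℂ (Fin N))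
    (hM : ∀ w, ‖M w‖ ≤ c * ‖w‖)
    (x : Fin N → ℋ)
    (hx : ∀ k, x k = ∑ j, (M (EuclideanSpace.single k (1 : ℂ))) j • fbH j) :
    (∑ k, ‖(inner ℂ (gH k) (T (x k)) : ℂ)‖ ^ p) ^ (1 / p) ≤ c * schattenNorm p T := by
  classical
  have hp0 : (0 : ℝ) < p := lt_of_lt_of_le one_pos hp
  have hc0 : (0 : ℝ) < c := lt_of_lt_of_le one_pos hc1
  have hS0 : 0 ≤ schattenNorm p T := le_csSup hT (zero_mem_schattenSet hp T)
  have hcC : ((c : ℝ) : ℂ) ≠ 0 := by simpa using ne_of_gt hc0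
  set L' : EuclideanSpace ℂ (Fin N) →ₗ[ℂ] EuclideanSpace ℂ (Fin N) := ((c : ℝ) : ℂ)⁻¹ • M
    with hL'def
  have hL'c : ∀ w, ‖L' w‖ ≤ ‖w‖ := by
    intro w
    rw [hL'def]
    simp only [LinearMap.smul_apply]
    rw [norm_smul, norm_inv]
    have h1 : ‖((c : ℝ) : ℂ)‖ = c := by
      rw [Complex.norm_real, Real.norm_eq_abs, abs_of_pos hc0]
    rw [h1, inv_mul_le_iff₀ hc0]
    exact hM w
  obtain ⟨U, W, hU, hW, hUW⟩ :=
    contraction_avg_two_isometries (finrank_euclideanSpace_fin) L' hL'c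
  have hLw : ∀ w, M w = ((c : ℝ) : ℂ) • L' w := by
    intro w
    rw [hL'def]
    simp only [LinearMap.smul_apply, smul_smul, mul_inv_cancel₀ hcC, one_smul]
  have hpair : ∀ (k : Fin N) (u : EuclideanSpace ℂ (Fin N)),
      (inner ℂ (gH k) (T (∑ j, u j • fbH j)) : ℂ)
        = ∑ j, u j * (inner ℂ (gH k) (T (fbH j)) : ℂ) := by
    intro k u
    rw [map_sum, inner_sum]
    simp_rw [_root_.map_smul, inner_smul_right]
  set e1 : Fin N → ℋ := fun k => ∑ j, (U (EuclideanSpace.single k (1 : ℂ))) j • fbH j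
    with he1def
  set e2 : Fin N → ℋ := fun k => ∑ j, (W (EuclideanSpace.single k (1 : ℂ))) j • fbH j
    with he2def
  have hinner_single : ∀ k l : Fin N,
      (inner ℂ (EuclideanSpace.single k (1 : ℂ)) (EuclideanSpace.single l (1 : ℂ)) : ℂ)
        = if k = l then 1 else 0 := by
    intro k l
    rw [EuclideanSpace.inner_single_left]
    simp only [map_one, one_mul, EuclideanSpace.single_apply]
  have he1on : Orthonormal ℂ e1 := by
    rw [orthonormal_iff_ite]
    intro k l
    rw [he1def]
    rw [Orthonormal.inner_sum hfb _ _ Finset.univ]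
    have h2 : (inner ℂ (U (EuclideanSpace.single k (1:ℂ))) (U (EuclideanSpace.single l (1:ℂ))) : ℂ)
        = ∑ j, (starRingEnd ℂ) ((U (EuclideanSpace.single k (1:ℂ))) j)
            * (U (EuclideanSpace.single l (1:ℂ))) j := by
      rw [PiLp.inner_apply]
      simp only [RCLike.inner_apply]
      exact Finset.sum_congr rfl fun _ _ => mul_comm _ _
    rw [← h2, hU, hinner_single]
  have he2on : Orthonormal ℂ e2 := by
    rw [orthonormal_iff_ite]
    intro k l
    rw [he2def]
    rw [Orthonormal.inner_sum hfb _ _ Finset.univ]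
    have h2 : (inner ℂ (W (EuclideanSpace.single k (1:ℂ))) (W (EuclideanSpace.single l (1:ℂ))) : ℂ)
        = ∑ j, (starRingEnd ℂ) ((W (EuclideanSpace.single k (1:ℂ))) j)
            * (W (EuclideanSpace.single l (1:ℂ))) j := by
      rw [PiLp.inner_apply]
      simp only [RCLike.inner_apply]
      exact Finset.sum_congr rfl fun _ _ => mul_comm _ _
    rw [← h2, hW, hinner_single]
  have hcoef : ∀ k j, (M (EuclideanSpace.single k (1:ℂ))) j
      = (((c : ℝ) : ℂ) / 2) * ((U (EuclideanSpace.single k (1:ℂ))) j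
          + (W (EuclideanSpace.single k (1:ℂ))) j) := by
    intro k j
    rw [hLw, hUW]
    simp only [PiLp.smul_apply, PiLp.add_apply, smul_eq_mul]
    rw [Complex.real_smul]
    push_cast
    ring
  have hw'sum : ∀ k, (inner ℂ (gH k) (T (x k)) : ℂ) = (((c : ℝ) : ℂ) / 2)
      * ((inner ℂ (gH k) (T (e1 k)) : ℂ) + (inner ℂ (gH k) (T (e2 k)) : ℂ)) := by
    intro k
    have hs1 : (inner ℂ (gH k) (T (e1 k)) : ℂ)
        = ∑ j, (U (EuclideanSpace.single k (1:ℂ))) j * (inner ℂ (gH k) (T (fbH j)) : ℂ) := by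
      rw [he1def]; exact hpair k _
    have hs2 : (inner ℂ (gH k) (T (e2 k)) : ℂ)
        = ∑ j, (W (EuclideanSpace.single k (1:ℂ))) j * (inner ℂ (gH k) (T (fbH j)) : ℂ) := by
      rw [he2def]; exact hpair k _
    have hs0 : (inner ℂ (gH k) (T (x k)) : ℂ)
        = ∑ j, (M (EuclideanSpace.single k (1:ℂ))) j * (inner ℂ (gH k) (T (fbH j)) : ℂ) := by
      rw [hx k]
      exact hpair k _
    rw [hs0, hs1, hs2, ← Finset.sum_add_distrib, Finset.mul_sum]
    refine Finset.sum_congr rfl fun j _ => ?_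
    rw [hcoef]
    ring
  -- ℓ^p triangle inequality
  have hq1 : (1 : ENNReal) ≤ ENNReal.ofReal p := by
    rw [← ENNReal.ofReal_one]
    exact ENNReal.ofReal_le_ofReal hp
  haveI : Fact ((1 : ENNReal) ≤ ENNReal.ofReal p) := ⟨hq1⟩
  have hqpos : 0 < (ENNReal.ofReal p).toReal := by
    rw [ENNReal.toReal_ofReal hp0.le]; exact hp0
  have hnorm_eq : ∀ u : Fin N → ℂ,
      ‖(WithLp.equiv (ENNReal.ofReal p) (Fin N → ℂ)).symm u‖
        = (∑ k, ‖u k‖ ^ p) ^ (1 / p) := by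
    intro u
    rw [PiLp.norm_eq_sum hqpos, ENNReal.toReal_ofReal hp0.le]
    rfl
  have hfuneq : (fun k => (inner ℂ (gH k) (T (x k)) : ℂ))
      = (((c : ℝ) : ℂ) / 2) • ((fun k => (inner ℂ (gH k) (T (e1 k)) : ℂ))
          + fun k => (inner ℂ (gH k) (T (e2 k)) : ℂ)) := by
    funext k
    simp only [Pi.smul_apply, Pi.add_apply, smul_eq_mul]
    exact hw'sum k
  have haa : (WithLp.equiv (ENNReal.ofReal p) (Fin N → ℂ)).symm
        (fun k => (inner ℂ (gH k) (T (x k)) : ℂ))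
      = (((c : ℝ) : ℂ) / 2) • ((WithLp.equiv (ENNReal.ofReal p) (Fin N → ℂ)).symm
          (fun k => (inner ℂ (gH k) (T (e1 k)) : ℂ))
        + (WithLp.equiv (ENNReal.ofReal p) (Fin N → ℂ)).symm
          (fun k => (inner ℂ (gH k) (T (e2 k)) : ℂ))) := by
    rw [WithLp.equiv_symm_apply, ← WithLp.toLp_add, ← WithLp.toLp_smul]
    exact congrArg _ hfuneq
  have hnc2 : ‖(((c : ℝ) : ℂ) / 2)‖ = c / 2 := by
    rw [norm_div]
    rw [Complex.norm_real, Real.norm_eq_abs, abs_of_pos hc0]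
    norm_num
  have hb1S : (∑ k, ‖(inner ℂ (gH k) (T (e1 k)) : ℂ)‖ ^ p) ^ (1 / p) ≤ schattenNorm p T :=
    le_csSup hT ⟨N, e1, gH, he1on, hgH, rfl⟩
  have hb2S : (∑ k, ‖(inner ℂ (gH k) (T (e2 k)) : ℂ)‖ ^ p) ^ (1 / p) ≤ schattenNorm p T :=
    le_csSup hT ⟨N, e2, gH, he2on, hgH, rfl⟩
  calc (∑ k, ‖(inner ℂ (gH k) (T (x k)) : ℂ)‖ ^ p) ^ (1 / p)
      = ‖(WithLp.equiv (ENNReal.ofReal p) (Fin N → ℂ)).symm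
          (fun k => (inner ℂ (gH k) (T (x k)) : ℂ))‖ := (hnorm_eq _).symm
    _ ≤ (c / 2) * (‖(WithLp.equiv (ENNReal.ofReal p) (Fin N → ℂ)).symm
          (fun k => (inner ℂ (gH k) (T (e1 k)) : ℂ))‖
        + ‖(WithLp.equiv (ENNReal.ofReal p) (Fin N → ℂ)).symm
          (fun k => (inner ℂ (gH k) (T (e2 k)) : ℂ))‖) := by
        rw [haa, norm_smul, hnc2]
        gcongr
        exact norm_add_le _ _
    _ ≤ (c / 2) * (schattenNorm p T + schattenNorm p T) := by
        rw [hnorm_eq, hnorm_eq]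
        gcongr
    _ = c * schattenNorm p T := by ring

open Module Finset in
lemma memSchatten_comp_of_le {p : ℝ} (hp : 1 ≤ p) (T A : ℋ →L[ℂ] ℋ) {c : ℝ} (hc1 : 1 ≤ c)
    (hA : ∀ v, ‖A v‖ ≤ c * ‖v‖) (hT : MemSchatten p T) :
    MemSchatten p (T.comp A) ∧ schattenNorm p (T.comp A) ≤ c * schattenNorm p T := by
  classical
  have hp0 : (0 : ℝ) < p := lt_of_lt_of_le one_pos hp
  have hc0 : (0 : ℝ) < c := lt_of_lt_of_le one_pos hc1
  set S := schattenNorm p T with hSdef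
  have hS0 : 0 ≤ S := le_csSup hT (zero_mem_schattenSet hp T)
  have key : ∀ r ∈ schattenSet p (T.comp A), r ≤ c * S := by
    rintro r ⟨m, e, g, he, hg, rfl⟩
    set F : Submodule ℂ ℋ := Submodule.span ℂ (Set.range g ∪ Set.range fun i => A (e i))
      with hFdef
    haveI hFfin : FiniteDimensional ℂ F :=
      FiniteDimensional.span_of_finite ℂ ((Set.finite_range g).union (Set.finite_range _))
    have hgF : ∀ i, g i ∈ F := fun i => Submodule.subset_span (Or.inl ⟨i, rfl⟩)
    have hxF0 : ∀ i, A (e i) ∈ F := fun i => Submodule.subset_span (Or.inr ⟨i, rfl⟩)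
    set g' : Fin m → F := fun i => ⟨g i, hgF i⟩ with hg'def
    have hg' : Orthonormal ℂ g' := by
      rw [orthonormal_iff_ite] at hg ⊢
      intro i j
      rw [hg'def]
      rw [Submodule.coe_inner]
      exact hg i j
    have hmN : m ≤ finrank ℂ F := by
      simpa using hg'.linearIndependent.fintype_card_le_finrank
    set N := finrank ℂ F with hNdef
    set σ : Fin m → Fin N := Fin.castLE hmN with hσdef
    have hσinj : Function.Injective σ := Fin.castLE_injective hmN
    -- extend `g'` to an orthonormal basis of `F`
    set v : Fin N → F := fun k => if h : (k : ℕ) < m then g' ⟨k, h⟩ else 0 with hvdef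
    have hvon : Orthonormal ℂ (Set.restrict {k : Fin N | (k : ℕ) < m} v) := by
      have hres : Set.restrict {k : Fin N | (k : ℕ) < m} v
          = g' ∘ (fun k : {k : Fin N | (k : ℕ) < m} => (⟨(k : Fin N), k.2⟩ : Fin m)) := by
        funext k
        simp only [Set.restrict_apply, hvdef, Function.comp_apply]
        exact dif_pos k.2
      rw [hres]
      exact hg'.comp _ (by
        intro k l h
        have hval := congrArg Fin.val h
        simp only [Fin.val_mk] at hval
        exact Subtype.ext (Fin.ext hval))
    obtain ⟨gbF, hgbF⟩ := Orthonormal.exists_orthonormalBasis_extension_of_card_eq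
      (by simp [hNdef]) hvon
    set gH : Fin N → ℋ := fun k => (gbF k : ℋ) with hgHdef
    have hgHon : Orthonormal ℂ gH := by
      rw [orthonormal_iff_ite]
      intro i j
      have := orthonormal_iff_ite.mp gbF.orthonormal i j
      rwa [Submodule.coe_inner] at this
    have hgHg : ∀ i : Fin m, gH (σ i) = g i := by
      intro i
      have hlt : ((σ i : Fin N) : ℕ) < m := i.2
      have h1 : gbF (σ i) = v (σ i) := hgbF (σ i) hlt
      show ((gbF (σ i) : F) : ℋ) = g i
      rw [h1]
      simp only [hvdef, dif_pos hlt]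
      rfl
    -- the vectors x k
    set x : Fin N → ℋ := fun k => if h : (k : ℕ) < m then A (e ⟨k, h⟩) else 0 with hxdef
    have hxmem : ∀ k, x k ∈ F := by
      intro k
      by_cases h : (k : ℕ) < m
      · simp only [hxdef, dif_pos h]; exact hxF0 ⟨k, h⟩
      · simp only [hxdef, dif_neg h]; exact F.zero_mem
    set xF : Fin N → F := fun k => ⟨x k, hxmem k⟩ with hxFdef
    have hxσ : ∀ i : Fin m, x (σ i) = A (e i) := by
      intro i
      have hlt : ((σ i : Fin N) : ℕ) < m := i.2
      simp only [hxdef, dif_pos hlt]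
      congr 1
    set fb := stdOrthonormalBasis ℂ F with hfbdef
    have hfbon : Orthonormal ℂ (fun j : Fin N => (fb j : ℋ)) := by
      rw [orthonormal_iff_ite]
      intro i j
      have := orthonormal_iff_ite.mp fb.orthonormal i j
      rwa [Submodule.coe_inner] at this
    -- the matrix as a linear map on Euclidean space
    set L : EuclideanSpace ℂ (Fin N) →ₗ[ℂ] EuclideanSpace ℂ (Fin N) :=
      { toFun := fun w => fb.repr (∑ k, w k • xF k)
        map_add' := by
          intro u w
          simp only [PiLp.add_apply, add_smul, Finset.sum_add_distrib, map_add]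
        map_smul' := by
          intro a w
          simp only [PiLp.smul_apply, smul_eq_mul, mul_smul, ← Finset.smul_sum,
            RingHom.id_apply]
          exact _root_.map_smul fb.repr a _ } with hLdef
    have hLapply : ∀ w, L w = fb.repr (∑ k, w k • xF k) := fun _ => rfl
    have hLnorm : ∀ w, ‖L w‖ ≤ c * ‖w‖ := by
      intro w
      have h1 : ‖L w‖ = ‖∑ k, w k • x k‖ := by
        rw [hLapply, fb.repr.norm_map]
        rw [← Submodule.norm_coe]
        congr 1
        push_cast
        rfl
      have h2 : ∑ k, w k • x k = A (∑ i : Fin m, w (σ i) • e i) := by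
        have h3 : ∑ k : Fin N, w k • x k = ∑ k ∈ Finset.univ.map ⟨σ, hσinj⟩, w k • x k := by
          refine (Finset.sum_subset (Finset.subset_univ _) ?_).symm
          intro k _ hk
          have hnot : ¬(k : ℕ) < m := by
            intro hkm
            exact hk (Finset.mem_map.mpr ⟨⟨(k : ℕ), hkm⟩, Finset.mem_univ _,
              Fin.ext rfl⟩)
          simp [hxdef, hnot]
        rw [h3, Finset.sum_map, map_sum]
        refine Finset.sum_congr rfl fun i _ => ?_
        simp only [Function.Embedding.coeFn_mk]
        rw [hxσ i, _root_.map_smul]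
      rw [h1, h2]
      refine (hA _).trans ?_
      have h4 : ‖∑ i : Fin m, w (σ i) • e i‖ ^ 2 = ∑ i : Fin m, ‖w (σ i)‖ ^ 2 := by
        have h5 := Orthonormal.inner_sum he (fun i => w (σ i)) (fun i => w (σ i)) Finset.univ
        have h6 : (inner ℂ (∑ i : Fin m, w (σ i) • e i) (∑ i : Fin m, w (σ i) • e i) : ℂ)
            = ((‖∑ i : Fin m, w (σ i) • e i‖ : ℝ) : ℂ) ^ 2 := inner_self_eq_norm_sq_to_K _
        rw [h6] at h5
        have h7 : ∀ i : Fin m, (starRingEnd ℂ) (w (σ i)) * w (σ i)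
            = ((‖w (σ i)‖ : ℝ) : ℂ) ^ 2 := fun i => RCLike.conj_mul _
        simp_rw [h7] at h5
        exact_mod_cast h5
      have h8 : ∑ i : Fin m, ‖w (σ i)‖ ^ 2 ≤ ‖w‖ ^ 2 := by
        have h9 : ‖w‖ ^ 2 = ∑ k : Fin N, ‖w k‖ ^ 2 := by
          rw [EuclideanSpace.norm_eq, Real.sq_sqrt]
          exact Finset.sum_nonneg fun k _ => sq_nonneg _
        rw [h9]
        have h10 : ∑ i : Fin m, ‖w (σ i)‖ ^ 2 = ∑ k ∈ Finset.univ.map ⟨σ, hσinj⟩, ‖w k‖ ^ 2 := by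
          rw [Finset.sum_map]; rfl
        rw [h10]
        exact Finset.sum_le_sum_of_subset_of_nonneg (Finset.subset_univ _)
          fun k _ _ => sq_nonneg _
      have h11 : ‖∑ i : Fin m, w (σ i) • e i‖ ≤ ‖w‖ := by
        nlinarith [norm_nonneg (∑ i : Fin m, w (σ i) • e i), norm_nonneg w]
      nlinarith [norm_nonneg w]
    have hLδ : ∀ k, L (EuclideanSpace.single k (1 : ℂ)) = fb.repr (xF k) := by
      intro k
      rw [hLapply]
      congr 1
      rw [Finset.sum_eq_single k]
      · rw [EuclideanSpace.single_apply, if_pos rfl, one_smul]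
      · intro l _ hl
        rw [EuclideanSpace.single_apply, if_neg hl, zero_smul]
      · intro hk
        exact absurd (Finset.mem_univ k) hk
    have hxrepr : ∀ k, x k = ∑ j, (L (EuclideanSpace.single k (1 : ℂ))) j • ((fb j : ℋ)) := by
      intro k
      have h1 : xF k = ∑ j, fb.repr (xF k) j • fb j := (fb.sum_repr (xF k)).symm
      have h2 : x k = ((xF k : F) : ℋ) := rfl
      rw [h2]
      conv_lhs => rw [h1]
      push_cast
      refine Finset.sum_congr rfl fun j _ => ?_
      rw [hLδ]
    have hmain := schatten_matrix_bound hp T hT hc1 hgHon hfbon L hLnorm x hxrepr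
    have hr2 : ∀ i : Fin m, (inner ℂ (g i) ((T.comp A) (e i)) : ℂ)
        = (inner ℂ (gH (σ i)) (T (x (σ i))) : ℂ) := by
      intro i
      rw [hgHg i, hxσ i]
      rfl
    have hsum_le : ∑ i : Fin m, ‖(inner ℂ (g i) ((T.comp A) (e i)) : ℂ)‖ ^ p
        ≤ ∑ k : Fin N, ‖(inner ℂ (gH k) (T (x k)) : ℂ)‖ ^ p := by
      simp_rw [hr2]
      have h10 : ∑ i : Fin m, ‖(inner ℂ (gH (σ i)) (T (x (σ i))) : ℂ)‖ ^ p
          = ∑ k ∈ Finset.univ.map ⟨σ, hσinj⟩, ‖(inner ℂ (gH k) (T (x k)) : ℂ)‖ ^ p := by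
        rw [Finset.sum_map]
        rfl
      rw [h10]
      exact Finset.sum_le_sum_of_subset_of_nonneg (Finset.subset_univ _)
        fun k _ _ => Real.rpow_nonneg (norm_nonneg _) _
    calc (∑ i, ‖(inner ℂ (g i) ((T.comp A) (e i)) : ℂ)‖ ^ p) ^ (1 / p)
        ≤ (∑ k, ‖(inner ℂ (gH k) (T (x k)) : ℂ)‖ ^ p) ^ (1 / p) :=
          Real.rpow_le_rpow
            (Finset.sum_nonneg fun i _ => Real.rpow_nonneg (norm_nonneg _) _)
            hsum_le (by positivity)
      _ ≤ c * S := hmain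
  refine ⟨⟨c * S, fun r hr => key r hr⟩, ?_⟩
  exact csSup_le ⟨0, zero_mem_schattenSet hp _⟩ key

set_option maxHeartbeats 1000000 in
/-- Let `H` be self-adjoint on `ℋ`, `V` symmetric with
`‖Vψ‖ ≤ a‖Hψ‖ + b‖ψ‖` on `dom H`, `a < 1`, and `V(H-i)^{-p} ∈ 𝒮^{n/p}` for `p = 1,…,n`.
For `t ∈ [0,1]` and `H_t = H + tV` (with resolvent `R_t = (H_t - i)⁻¹`), the operator
`V(H_t - i)⁻¹` belongs to `𝒮ⁿ` with
`‖V(H_t - i)⁻¹‖_n ≤ ((1+b)/(1-a))·‖V(H-i)⁻¹‖_n`. -/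
theorem schatten_bound_shifted_resolvent
    (H V : ℋ →ₗ.[ℂ] ℋ) (hH : IsSelfAdjoint H)
    (hdom : H.domain ≤ V.domain)
    (hsymm : ∀ x y : V.domain, (inner ℂ (V x) (y : ℋ) : ℂ) = inner ℂ (x : ℋ) (V y))
    (a b : ℝ) (ha0 : 0 ≤ a) (ha : a < 1) (hb : 0 ≤ b)
    (hbound : ∀ ψ : H.domain, ‖V ⟨(ψ : ℋ), hdom ψ.2⟩‖ ≤ a * ‖H ψ‖ + b * ‖(ψ : ℋ)‖)
    (n : ℕ) (hn : 1 ≤ n)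
    (R : ℋ →L[ℂ] ℋ) (hR1 : ∀ ψ : ℋ, R ψ ∈ H.domain)
    (hR2 : ∀ ψ : ℋ, H ⟨R ψ, hR1 ψ⟩ - I • R ψ = ψ)
    (hR3 : ∀ φ : H.domain, R (H φ - I • (φ : ℋ)) = (φ : ℋ))
    -- the operators `V(H-i)^{-p}` and the hypothesis `V(H-i)^{-p} ∈ 𝒮^{n/p}`, `p = 1,…,n`
    (hmemp : ∀ p : ℕ, 1 ≤ p → ∀ ψ : ℋ, (⇑R)^[p] ψ ∈ V.domain)
    (VRp : ℕ → (ℋ →L[ℂ] ℋ))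
    (hVRp : ∀ (p : ℕ) (hp : 1 ≤ p), p ≤ n →
      ∀ ψ : ℋ, VRp p ψ = V ⟨(⇑R)^[p] ψ, hmemp p hp ψ⟩)
    (hSch : ∀ p : ℕ, 1 ≤ p → p ≤ n → MemSchatten ((n : ℝ) / (p : ℝ)) (VRp p))
    -- `H_t = H + tV` and its resolvent
    (t : ℝ) (ht0 : 0 ≤ t) (ht1 : t ≤ 1)
    (Rt : ℋ →L[ℂ] ℋ) (hRt1 : ∀ ψ : ℋ, Rt ψ ∈ H.domain)
    (hRt2 : ∀ ψ : ℋ,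
      H ⟨Rt ψ, hRt1 ψ⟩ + (t : ℂ) • V ⟨Rt ψ, hdom (hRt1 ψ)⟩ - I • Rt ψ = ψ)
    (hRt3 : ∀ φ : H.domain,
      Rt (H φ + (t : ℂ) • V ⟨(φ : ℋ), hdom φ.2⟩ - I • (φ : ℋ)) = (φ : ℋ))
    (VRt : ℋ →L[ℂ] ℋ) (hVRt : ∀ ψ : ℋ, VRt ψ = V ⟨Rt ψ, hdom (hRt1 ψ)⟩) :
    MemSchatten (n : ℝ) VRt ∧
      schattenNorm (n : ℝ) VRt ≤ ((1 + b) / (1 - a)) * schattenNorm (n : ℝ) (VRp 1) := by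
  classical
  have hden : (0 : ℝ) < 1 - a := by linarith
  -- symmetry of `H`
  have hdense : Dense (H.domain : Set ℋ) := hH.dense_domain
  have hHsym : H.IsFormalAdjoint H := by
    have h1 : H.adjoint = H := LinearPMap.isSelfAdjoint_def.mp hH
    have h2 := LinearPMap.adjoint_isFormalAdjoint (T := H) hdense
    rwa [h1] at h2
  -- `⟪H_t φ, φ⟫` is real
  have hreal : ∀ φ : H.domain,
      (inner ℂ ((H φ + (t : ℂ) • V ⟨(φ : ℋ), hdom φ.2⟩ : ℋ)) ((φ : ℋ)) : ℂ)
        = inner ℂ ((φ : ℋ)) ((H φ + (t : ℂ) • V ⟨(φ : ℋ), hdom φ.2⟩ : ℋ)) := by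
    intro φ
    rw [inner_add_left, inner_add_right, inner_smul_left, inner_smul_right]
    rw [hHsym φ φ, hsymm ⟨(φ : ℋ), hdom φ.2⟩ ⟨(φ : ℋ), hdom φ.2⟩]
    rw [Complex.conj_ofReal]
  -- Pythagoras for the resolvent `Rt`
  have hpyth : ∀ ψ : ℋ,
      ‖H ⟨Rt ψ, hRt1 ψ⟩ + (t : ℂ) • V ⟨Rt ψ, hdom (hRt1 ψ)⟩‖ ^ 2 + ‖Rt ψ‖ ^ 2
        = ‖ψ‖ ^ 2 := by
    intro ψ
    set K : ℋ := H ⟨Rt ψ, hRt1 ψ⟩ + (t : ℂ) • V ⟨Rt ψ, hdom (hRt1 ψ)⟩ with hKdef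
    have h2 := hRt2 ψ
    have h3 := norm_sub_sq (𝕜 := ℂ) K (I • Rt ψ)
    have h5 : (inner ℂ K (Rt ψ) : ℂ) = (starRingEnd ℂ) (inner ℂ K (Rt ψ) : ℂ) := by
      calc (inner ℂ K (Rt ψ) : ℂ) = inner ℂ (Rt ψ) K := hreal ⟨Rt ψ, hRt1 ψ⟩
        _ = (starRingEnd ℂ) (inner ℂ K (Rt ψ) : ℂ) := (inner_conj_symm _ _).symm
    have him : (inner ℂ K (Rt ψ) : ℂ).im = 0 := by
      have := congrArg Complex.im h5
      simp only [Complex.conj_im] at this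
      linarith
    have h4 : RCLike.re (inner ℂ K (I • Rt ψ) : ℂ) = 0 := by
      rw [inner_smul_right]
      simp [RCLike.re_to_complex, Complex.mul_re, him]
    have h6 : ‖I • Rt ψ‖ = ‖Rt ψ‖ := by
      rw [norm_smul, Complex.norm_I, one_mul]
    rw [h2] at h3
    rw [h4, h6] at h3
    linarith
  have hRtle : ∀ ψ, ‖Rt ψ‖ ≤ ‖ψ‖ := by
    intro ψ
    nlinarith [hpyth ψ, norm_nonneg (Rt ψ), norm_nonneg ψ,
      sq_nonneg (‖H ⟨Rt ψ, hRt1 ψ⟩ + (t : ℂ) • V ⟨Rt ψ, hdom (hRt1 ψ)⟩‖)]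
  have hKle : ∀ ψ, ‖H ⟨Rt ψ, hRt1 ψ⟩ + (t : ℂ) • V ⟨Rt ψ, hdom (hRt1 ψ)⟩‖ ≤ ‖ψ‖ := by
    intro ψ
    nlinarith [hpyth ψ, norm_nonneg ψ, sq_nonneg (‖Rt ψ‖),
      norm_nonneg (H ⟨Rt ψ, hRt1 ψ⟩ + (t : ℂ) • V ⟨Rt ψ, hdom (hRt1 ψ)⟩)]
  have htnorm : ∀ u : ℋ, ‖(t : ℂ) • u‖ = t * ‖u‖ := by
    intro u
    rw [norm_smul, Complex.norm_real, Real.norm_eq_abs, _root_.abs_of_nonneg ht0]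
  -- bound on `V Rt`
  have hVRtle : ∀ ψ, ‖VRt ψ‖ ≤ (a + b) / (1 - a) * ‖ψ‖ := by
    intro ψ
    have hb1 := hbound ⟨Rt ψ, hRt1 ψ⟩
    have hH1 : ‖H ⟨Rt ψ, hRt1 ψ⟩‖ ≤ ‖ψ‖ + t * ‖VRt ψ‖ := by
      have he : H ⟨Rt ψ, hRt1 ψ⟩
          = (H ⟨Rt ψ, hRt1 ψ⟩ + (t : ℂ) • V ⟨Rt ψ, hdom (hRt1 ψ)⟩)
            - (t : ℂ) • V ⟨Rt ψ, hdom (hRt1 ψ)⟩ := by abel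
      rw [he]
      refine (norm_sub_le _ _).trans ?_
      have h7 : ‖(t : ℂ) • V ⟨Rt ψ, hdom (hRt1 ψ)⟩‖ = t * ‖VRt ψ‖ := by
        rw [htnorm, hVRt ψ]
      rw [h7]
      exact add_le_add_left (hKle ψ) _
    have hX : ‖VRt ψ‖ ≤ a * (‖ψ‖ + t * ‖VRt ψ‖) + b * ‖ψ‖ := by
      calc ‖VRt ψ‖ = ‖V ⟨Rt ψ, hdom (hRt1 ψ)⟩‖ := by rw [hVRt ψ]
        _ ≤ a * ‖H ⟨Rt ψ, hRt1 ψ⟩‖ + b * ‖Rt ψ‖ := hb1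
        _ ≤ a * (‖ψ‖ + t * ‖VRt ψ‖) + b * ‖ψ‖ := by
            have := hRtle ψ
            gcongr
    rw [div_mul_eq_mul_div, le_div_iff₀ hden]
    nlinarith [norm_nonneg (VRt ψ), norm_nonneg ψ,
      mul_nonneg (mul_nonneg ha0 (sub_nonneg.mpr ht1)) (norm_nonneg (VRt ψ))]
  -- the operator `A = 1 - t V Rt` and its bound
  set A : ℋ →L[ℂ] ℋ := ContinuousLinearMap.id ℂ ℋ - (t : ℂ) • VRt with hAdef
  have hAψ : ∀ ψ, A ψ = ψ - (t : ℂ) • VRt ψ := fun ψ => rfl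
  have hc1 : (1 : ℝ) ≤ (1 + b) / (1 - a) := by
    rw [le_div_iff₀ hden]
    nlinarith
  have hAbound : ∀ ψ, ‖A ψ‖ ≤ ((1 + b) / (1 - a)) * ‖ψ‖ := by
    intro ψ
    rw [hAψ]
    refine (norm_sub_le _ _).trans ?_
    rw [htnorm]
    have h8 : t * ‖VRt ψ‖ ≤ (a + b) / (1 - a) * ‖ψ‖ := by
      calc t * ‖VRt ψ‖ ≤ 1 * ‖VRt ψ‖ := by gcongr
        _ = ‖VRt ψ‖ := one_mul _
        _ ≤ _ := hVRtle ψ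
    have h9 : ‖ψ‖ + (a + b) / (1 - a) * ‖ψ‖ = ((1 + b) / (1 - a)) * ‖ψ‖ := by
      field_simp
      ring
    linarith
  -- second resolvent identity: `V Rt = (V R) ∘ A`
  have hid : VRt = (VRp 1).comp A := by
    ext ψ
    have h8 : H ⟨Rt ψ, hRt1 ψ⟩ - I • Rt ψ = ψ - (t : ℂ) • V ⟨Rt ψ, hdom (hRt1 ψ)⟩ := by
      have h2 := hRt2 ψ
      have h2' : (H ⟨Rt ψ, hRt1 ψ⟩ - I • Rt ψ) + (t : ℂ) • V ⟨Rt ψ, hdom (hRt1 ψ)⟩ = ψ := by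
        conv_rhs => rw [← h2]
        abel
      exact eq_sub_of_add_eq h2'
    have h9 : R (ψ - (t : ℂ) • V ⟨Rt ψ, hdom (hRt1 ψ)⟩) = Rt ψ := by
      have h10 := hR3 ⟨Rt ψ, hRt1 ψ⟩
      rwa [h8] at h10
    have hAψ' : A ψ = ψ - (t : ℂ) • V ⟨Rt ψ, hdom (hRt1 ψ)⟩ := by
      rw [hAψ, hVRt ψ]
    rw [ContinuousLinearMap.comp_apply, hVRp 1 le_rfl hn]
    have h10 : (⇑R)^[1] (A ψ) = Rt ψ := by
      simp only [Function.iterate_one]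
      rw [hAψ', h9]
    have h11 : (⟨(⇑R)^[1] (A ψ), hmemp 1 le_rfl (A ψ)⟩ : V.domain)
        = ⟨Rt ψ, hdom (hRt1 ψ)⟩ := Subtype.ext h10
    rw [h11, hVRt ψ]
  have hSch1 : MemSchatten (n : ℝ) (VRp 1) := by
    have := hSch 1 le_rfl hn
    simpa using this
  have hfinal := memSchatten_comp_of_le (p := (n : ℝ)) (by exact_mod_cast hn)
    (VRp 1) A hc1 hAbound hSch1
  rw [hid]
  exact hfinal
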